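/- Let P and k be positive integers, and let 𝓕 be a finite set of connected cographs, all of height at most k. Then there exists a connected cograph C of height k that is (𝓕,P)-universal, i.e., C admits no (𝓕,P)-partition. -/

import Mathlib

/-- A graph `G` contains a graph `H` if some induced subgraph of `G` is isomorphic to `H`. -/
def Contains {α β : Type} (G : SimpleGraph α) (H : SimpleGraph β) : Prop :=
  ∃ s : Set α, Nonempty ((G.induce s) ≃g H)

/-- `G` is `H`-free if `G` does not contain `H`. -/
def Free {α β : Type} (G : SimpleGraph α) (H : SimpleGraph β) : Prop := ¬ Contains G H

/-- `CographHeight G k` says that `G` is a cograph of height exactly `k`: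
a one-vertex graph has height `0`; if `G` is not connected its height is one more than
the maximum height of its components; if `G` is not anticonnected its height is one more
than the maximum height of its anticomponents. -/
inductive CographHeight : ∀ {V : Type}, SimpleGraph V → ℕ → Prop
  | single {V : Type} (G : SimpleGraph V) (v : V) (hv : ∀ w, w = v) : CographHeight G 0
  | union {V : Type} (G : SimpleGraph V) (k : ℕ) (h : ¬ G.Connected)
      (ht : G.ConnectedComponent → ℕ)
      (hc : ∀ c : G.ConnectedComponent, CographHeight (G.induce c.supp) (ht c))
      (hle : ∀ c, ht c ≤ k) (hmax : ∃ c, ht c = k) :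
      CographHeight G (k + 1)
  | join {V : Type} (G : SimpleGraph V) (k : ℕ) (h : ¬ Gᶜ.Connected)
      (ht : Gᶜ.ConnectedComponent → ℕ)
      (hc : ∀ c : Gᶜ.ConnectedComponent, CographHeight (G.induce c.supp) (ht c))
      (hle : ∀ c, ht c ≤ k) (hmax : ∃ c, ht c = k) :
      CographHeight G (k + 1)


/-- The vertex type `γ` can be partitioned into `P` subsets each of which is a singleton
or satisfies the predicate `Ok`. -/
def HasPartition {γ : Type} (P : ℕ) (Ok : Set γ → Prop) : Prop :=
  ∃ X : Fin P → Set γ, (⋃ i, X i) = Set.univ ∧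
    (Pairwise fun i j => Disjoint (X i) (X j)) ∧
    ∀ i, (∃ v, X i = {v}) ∨ Ok (X i)

namespace Stmt9Aux

open SimpleGraph


/-- The alternating adjacency pattern: `true` = join at top level, `false` = union. -/
def adjP (n : ℕ) : Bool → (k : ℕ) → (Fin k → Fin n) → (Fin k → Fin n) → Prop
  | _, 0, _, _ => False
  | true, k+1, u, v => u 0 ≠ v 0 ∨ (u 0 = v 0 ∧ adjP n false k (Fin.tail u) (Fin.tail v))
  | false, k+1, u, v => u 0 = v 0 ∧ adjP n true k (Fin.tail u) (Fin.tail v)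

lemma adjP_true_succ {n k : ℕ} (u v : Fin (k+1) → Fin n) :
    adjP n true (k+1) u v ↔ (u 0 ≠ v 0 ∨ (u 0 = v 0 ∧ adjP n false k (Fin.tail u) (Fin.tail v))) :=
  Iff.rfl

lemma adjP_false_succ {n k : ℕ} (u v : Fin (k+1) → Fin n) :
    adjP n false (k+1) u v ↔ (u 0 = v 0 ∧ adjP n true k (Fin.tail u) (Fin.tail v)) :=
  Iff.rfl

lemma adjP_zero {n : ℕ} (b : Bool) (u v : Fin 0 → Fin n) : ¬ adjP n b 0 u v := by
  cases b <;> exact fun h => h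

lemma adjP_symm {n : ℕ} : ∀ (b : Bool) (k : ℕ) (u v : Fin k → Fin n),
    adjP n b k u v → adjP n b k v u := by
  intro b k
  induction k generalizing b with
  | zero => intro u v h; exact absurd h (adjP_zero b u v)
  | succ k ih =>
    intro u v h
    cases b with
    | true =>
      rcases h with h | ⟨h1, h2⟩
      · exact Or.inl (Ne.symm h)
      · exact Or.inr ⟨h1.symm, ih false _ _ h2⟩
    | false => exact ⟨h.1.symm, ih true _ _ h.2⟩

lemma adjP_irrefl {n : ℕ} : ∀ (b : Bool) (k : ℕ) (u : Fin k → Fin n),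
    ¬ adjP n b k u u := by
  intro b k
  induction k generalizing b with
  | zero => intro u; exact adjP_zero b u u
  | succ k ih =>
    intro u h
    cases b with
    | true =>
      rcases h with h | ⟨_, h2⟩
      · exact h rfl
      · exact ih false _ h2
    | false => exact ih true _ h.2

/-- The graph with the alternating pattern. -/
def Gb (b : Bool) (k n : ℕ) : SimpleGraph (Fin k → Fin n) where
  Adj u v := adjP n b k u v
  symm := ⟨fun u v h => adjP_symm b k u v h⟩
  loopless := ⟨fun u h => adjP_irrefl b k u h⟩

lemma Gb_adj (b : Bool) (k n : ℕ) (u v : Fin k → Fin n) :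
    (Gb b k n).Adj u v ↔ adjP n b k u v := Iff.rfl

lemma tail_ne {n k : ℕ} {u v : Fin (k+1) → Fin n} (h : u ≠ v) (h0 : u 0 = v 0) :
    Fin.tail u ≠ Fin.tail v := by
  intro ht
  apply h
  rw [← Fin.cons_self_tail u, ← Fin.cons_self_tail v, h0, ht]

lemma adjP_not {n : ℕ} : ∀ (k : ℕ) (b : Bool) (u v : Fin k → Fin n), u ≠ v →
    (adjP n (!b) k u v ↔ ¬ adjP n b k u v) := by
  intro k
  induction k with
  | zero =>
    intro b u v huv
    exact absurd (funext fun i => i.elim0) huv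
  | succ k ih =>
    intro b u v huv
    by_cases h0 : u 0 = v 0
    · have hne := tail_ne huv h0
      have iht : adjP n true k (Fin.tail u) (Fin.tail v) ↔
          ¬ adjP n false k (Fin.tail u) (Fin.tail v) := ih false _ _ hne
      cases b with
      | true =>
        show adjP n false (k+1) u v ↔ ¬ adjP n true (k+1) u v
        rw [adjP_false_succ, adjP_true_succ]
        constructor
        · rintro ⟨_, h2⟩ (h | ⟨_, h3⟩)
          · exact h h0
          · exact (iht.mp h2) h3
        · intro h
          exact ⟨h0, iht.mpr (fun h3 => h (Or.inr ⟨h0, h3⟩))⟩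
      | false =>
        show adjP n true (k+1) u v ↔ ¬ adjP n false (k+1) u v
        rw [adjP_false_succ, adjP_true_succ]
        constructor
        · rintro (h | ⟨_, h3⟩) ⟨_, h2⟩
          · exact h h0
          · exact (iht.mp h2) h3
        · intro h
          refine Or.inr ⟨h0, ?_⟩
          by_contra h3
          exact h ⟨h0, iht.mpr (fun h4 => h3 h4)⟩
    · cases b with
      | true =>
        show adjP n false (k+1) u v ↔ ¬ adjP n true (k+1) u v
        rw [adjP_false_succ, adjP_true_succ]
        constructor
        · rintro ⟨h1, _⟩; exact absurd h1 h0
        · intro h; exact absurd (Or.inl h0) h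
      | false =>
        show adjP n true (k+1) u v ↔ ¬ adjP n false (k+1) u v
        rw [adjP_false_succ, adjP_true_succ]
        constructor
        · intro _ ⟨h1, _⟩; exact h0 h1
        · intro _; exact Or.inl h0

lemma Gb_compl (b : Bool) (k n : ℕ) : (Gb b k n)ᶜ = Gb (!b) k n := by
  ext u v
  simp only [compl_adj, Gb_adj]
  constructor
  · rintro ⟨hne, hn⟩
    exact (adjP_not k b u v hne).mpr hn
  · intro h
    have hne : u ≠ v := by rintro rfl; exact adjP_irrefl (!b) k u h
    exact ⟨hne, fun h2 => (adjP_not k b u v hne).mp h h2⟩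

/-- cons adjacency, `true` version. -/
lemma Gb_adj_cons_true {n k : ℕ} (a b : Fin n) (x y : Fin k → Fin n) :
    (Gb true (k+1) n).Adj (Fin.cons a x) (Fin.cons b y) ↔
      (a ≠ b ∨ (a = b ∧ (Gb false k n).Adj x y)) := by
  rw [Gb_adj, adjP_true_succ]
  simp [Fin.tail_cons, Gb_adj]

lemma Gb_adj_cons_false {n k : ℕ} (a b : Fin n) (x y : Fin k → Fin n) :
    (Gb false (k+1) n).Adj (Fin.cons a x) (Fin.cons b y) ↔
      (a = b ∧ (Gb true k n).Adj x y) := by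
  rw [Gb_adj, adjP_false_succ]
  simp [Fin.tail_cons, Gb_adj]



/-- complement iso -/
def isoCompl {V W : Type} {G : SimpleGraph V} {H : SimpleGraph W} (e : G ≃g H) : Gᶜ ≃g Hᶜ where
  toEquiv := e.toEquiv
  map_rel_iff' := by
    intro a b
    simp only [compl_adj]
    exact and_congr (not_congr e.toEquiv.apply_eq_iff_eq) (not_congr e.map_adj_iff)

@[simp] lemma isoCompl_apply {V W : Type} {G : SimpleGraph V} {H : SimpleGraph W}
    (e : G ≃g H) (v : V) : isoCompl e v = e v := rfl

/-- induce iso on image -/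
def isoInduce {V W : Type} {G : SimpleGraph V} {H : SimpleGraph W} (e : G ≃g H) (s : Set V) :
    G.induce s ≃g H.induce (e '' s) where
  toEquiv := e.toEquiv.image s
  map_rel_iff' := fun {a b} => e.map_adj_iff

lemma image_supp {V W : Type} {G : SimpleGraph V} {H : SimpleGraph W} (e : G ≃g H)
    (c : G.ConnectedComponent) :
    ⇑e '' c.supp = (e.connectedComponentEquiv c).supp := by
  ext v
  constructor
  · rintro ⟨u, hu, rfl⟩
    simp only [ConnectedComponent.mem_supp_iff] at hu ⊢
    rw [← hu]
    rfl
  · intro hv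
    refine ⟨e.symm v, ?_, e.apply_symm_apply v⟩
    simp only [ConnectedComponent.mem_supp_iff] at hv ⊢
    exact ConnectedComponent.iso_inv_image_comp_eq_iff_eq_map.mpr hv

lemma cographHeight_iso : ∀ {V : Type} {G : SimpleGraph V} {m : ℕ}, CographHeight G m →
    ∀ {W : Type} (H : SimpleGraph W) (e : G ≃g H), CographHeight H m := by
  intro V G m hG
  induction hG with
  | single G v hv =>
    intro W H e
    exact CographHeight.single H (e v) (fun w => by
      rw [← e.apply_symm_apply w, hv (e.symm w)])
  | union G k h ht hc hle hmax ih =>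
    intro W H e
    refine CographHeight.union H k (fun hH => h (e.connected_iff.mpr hH))
      (fun d => ht (e.connectedComponentEquiv.symm d)) (fun d => ?_)
      (fun d => hle _) ?_
    · have h1 := ih (e.connectedComponentEquiv.symm d) (H.induce
        (⇑e '' (e.connectedComponentEquiv.symm d).supp))
        (isoInduce e _)
      rwa [image_supp, Equiv.apply_symm_apply] at h1
    · obtain ⟨c, hck⟩ := hmax
      exact ⟨e.connectedComponentEquiv c, by simp [hck]⟩
  | join G k h ht hc hle hmax ih =>
    intro W H e
    refine CographHeight.join H k (fun hH => h ((isoCompl e).connected_iff.mpr hH))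
      (fun d => ht ((isoCompl e).connectedComponentEquiv.symm d)) (fun d => ?_)
      (fun d => hle _) ?_
    · have h1 := ih ((isoCompl e).connectedComponentEquiv.symm d) (H.induce
        (⇑e '' ((isoCompl e).connectedComponentEquiv.symm d).supp))
        (isoInduce e _)
      have h2 : ⇑e '' ((isoCompl e).connectedComponentEquiv.symm d).supp = d.supp := by
        have := image_supp (isoCompl e) ((isoCompl e).connectedComponentEquiv.symm d)
        rw [Equiv.apply_symm_apply] at this
        rw [← this]
        rfl
      rwa [h2] at h1
    · obtain ⟨c, hck⟩ := hmax
      exact ⟨(isoCompl e).connectedComponentEquiv c, by simp [hck]⟩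

lemma cographHeight_nonempty {V : Type} {G : SimpleGraph V} {m : ℕ}
    (hG : CographHeight G m) : Nonempty V := by
  cases hG with
  | single G v hv => exact ⟨v⟩
  | union G k h ht hc hle hmax =>
    obtain ⟨c, -⟩ := hmax
    obtain ⟨v, -⟩ := c.exists_rep
    exact ⟨v⟩
  | join G k h ht hc hle hmax =>
    obtain ⟨c, -⟩ := hmax
    obtain ⟨v, -⟩ := c.exists_rep
    exact ⟨v⟩


section Conn

/-- `Gb true` is connected. -/
lemma conn_true (k n : ℕ) (hn : 1 ≤ n) : (Gb true k n).Connected := by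
  have hne : Nonempty (Fin k → Fin n) := ⟨fun _ => ⟨0, hn⟩⟩
  rw [connected_iff]
  refine ⟨?_, hne⟩
  intro u v
  by_cases huv : u = v
  · exact huv ▸ Reachable.refl u
  · cases k with
    | zero => exact absurd (funext fun i => i.elim0) huv
    | succ k =>
      by_cases h0 : u 0 = v 0
      · have : Nontrivial (Fin n) := by
          obtain ⟨i, hi⟩ := Function.ne_iff.mp huv
          exact ⟨u i, v i, hi⟩
        obtain ⟨a, ha⟩ := exists_ne (u 0)
        set w : Fin (k+1) → Fin n := Fin.cons a (Fin.tail v) with hw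
        have h1 : (Gb true (k+1) n).Adj u w := by
          rw [Gb_adj, adjP_true_succ]
          exact Or.inl (by rw [hw, Fin.cons_zero]; exact Ne.symm ha)
        have h2 : (Gb true (k+1) n).Adj w v := by
          rw [Gb_adj, adjP_true_succ]
          refine Or.inl ?_
          rw [hw, Fin.cons_zero, ← h0]
          exact ha
        exact (h1.reachable).trans h2.reachable
      · exact Adj.reachable (by rw [Gb_adj, adjP_true_succ]; exact Or.inl h0)

/-- edges of `Gb false (k+1) n` preserve the first coordinate; hence so does reachability. -/
lemma reach_head {k n : ℕ} {u v : Fin (k+1) → Fin n}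
    (h : (Gb false (k+1) n).Reachable u v) : u 0 = v 0 := by
  obtain ⟨p⟩ := h
  induction p with
  | nil => rfl
  | cons h p ih =>
    have h1 := (Gb_adj _ _ _ _ _).mp h
    rw [adjP_false_succ] at h1
    exact h1.1.trans ih

/-- fiber iso : the induced subgraph of `Gb b (k+1) n` on a first-coordinate fiber
is isomorphic to `Gb (!b) k n`. -/
def fiberIso (b : Bool) (k n : ℕ) (a : Fin n) :
    (Gb b (k+1) n).induce {v | v 0 = a} ≃g Gb (!b) k n where
  toEquiv :=
    { toFun := fun x => Fin.tail x.1
      invFun := fun y => ⟨Fin.cons a y, by simp⟩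
      left_inv := fun x => by
        apply Subtype.ext
        have hx : x.1 0 = a := x.2
        simp only [← hx, Fin.cons_self_tail]
      right_inv := fun y => by simp [Fin.tail_cons] }
  map_rel_iff' := by
    intro x y
    have hx : x.1 0 = a := x.2
    have hy : y.1 0 = a := y.2
    simp only [Equiv.coe_fn_mk, comap_adj, Function.Embedding.coe_subtype]
    cases b with
    | true =>
      constructor
      · intro h
        exact (adjP_true_succ _ _).mpr (Or.inr ⟨hx.trans hy.symm, h⟩)
      · intro h
        rcases (adjP_true_succ _ _).mp h with h | h
        · exact absurd (hx.trans hy.symm) h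
        · exact h.2
    | false =>
      constructor
      · intro h
        exact (adjP_false_succ _ _).mpr ⟨hx.trans hy.symm, h⟩
      · intro h
        exact ((adjP_false_succ _ _).mp h).2

/-- general lemma : the induced subgraph on a connected component is connected. -/
lemma induce_supp_connected {V : Type} (G : SimpleGraph V) (c : G.ConnectedComponent) :
    (G.induce c.supp).Connected := by
  obtain ⟨u0, hu0⟩ := c.exists_rep
  rw [connected_iff]
  have key : ∀ (u v : V) (p : G.Walk u v) (hu : u ∈ c.supp),
      ∃ (hv : v ∈ c.supp), (G.induce c.supp).Reachable ⟨u, hu⟩ ⟨v, hv⟩ := by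
    intro u v p
    induction p with
    | nil => intro hu; exact ⟨hu, Reachable.refl _⟩
    | @cons a b w hab p ih =>
      intro ha
      have hb : b ∈ c.supp := by
        rw [ConnectedComponent.mem_supp_iff] at ha ⊢
        rw [← ha]
        exact ConnectedComponent.sound hab.symm.reachable
      obtain ⟨hw, hr⟩ := ih hb
      refine ⟨hw, Reachable.trans (Adj.reachable ?_) hr⟩
      exact hab
  constructor
  · rintro ⟨u, hu⟩ ⟨v, hv⟩
    have hruv : G.Reachable u v := by
      rw [ConnectedComponent.mem_supp_iff] at hu hv
      exact ConnectedComponent.exact (hu.trans hv.symm)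
    obtain ⟨p⟩ := hruv
    obtain ⟨hv', hr⟩ := key u v p hu
    convert hr using 2
  · exact ⟨⟨u0, hu0 ▸ ConnectedComponent.connectedComponentMk_mem⟩⟩

/-- support of components of `Gb false (k+1) n` : the first-coordinate fibers. -/
lemma supp_false_eq {k n : ℕ} (hn : 1 ≤ n) (u : Fin (k+1) → Fin n) :
    ((Gb false (k+1) n).connectedComponentMk u).supp = {v | v 0 = u 0} := by
  ext v
  simp only [ConnectedComponent.mem_supp_iff, Set.mem_setOf_eq, ConnectedComponent.eq]
  constructor
  · intro h; exact reach_head h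
  · intro h
    -- reachable within the fiber, via the fiber iso to Gb true k n
    have hconn := conn_true k n hn
    have hiso := fiberIso false k n (u 0)
    have hconn' : ((Gb false (k+1) n).induce {w | w 0 = u 0}).Connected := by
      rw [hiso.connected_iff]
      exact hconn
    have hr := hconn' ⟨v, h⟩ ⟨u, rfl⟩
    exact hr.map (SimpleGraph.Embedding.induce ({w : Fin (k+1) → Fin n | w 0 = u 0})).toHom

lemma not_conn_false {k n : ℕ} (hn : 2 ≤ n) : ¬ (Gb false (k+1) n).Connected := by
  intro h
  have h1 := h (fun _ => ⟨0, by omega⟩) (fun _ => ⟨1, by omega⟩)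
  have h2 := reach_head h1
  have h3 : (0 : ℕ) = 1 := congrArg Fin.val h2
  omega

/-- the height of `Gb b k n` is `k`. -/
lemma height_Gb : ∀ (k : ℕ) (b : Bool) (n : ℕ), 2 ≤ n → CographHeight (Gb b k n) k := by
  intro k
  induction k with
  | zero =>
    intro b n hn
    exact CographHeight.single _ (fun i => i.elim0) (fun w => funext fun i => i.elim0)
  | succ k ih =>
    intro b n hn
    have hn1 : 1 ≤ n := by omega
    cases b with
    | false =>
      refine CographHeight.union _ k (not_conn_false hn) (fun _ => k) (fun c => ?_)
        (fun _ => le_refl k) ⟨(Gb false (k+1) n).connectedComponentMk (fun _ => ⟨0, hn1⟩), rfl⟩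
      induction c using SimpleGraph.ConnectedComponent.ind with
      | _ u =>
        rw [supp_false_eq hn1 u]
        exact cographHeight_iso (ih true n hn) _ (fiberIso false k n (u 0)).symm
    | true =>
      have hcompl : (Gb true (k+1) n)ᶜ = Gb false (k+1) n := Gb_compl true (k+1) n
      refine CographHeight.join _ k ?_ (fun _ => k) ?_ (fun _ => le_refl k) ?_
      · rw [hcompl]; exact not_conn_false hn
      · rw [hcompl]
        intro c
        induction c using SimpleGraph.ConnectedComponent.ind with
        | _ u =>
          rw [supp_false_eq hn1 u]
          exact cographHeight_iso (ih false n hn) _ (fiberIso true k n (u 0)).symm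
      · rw [hcompl]
        exact ⟨(Gb false (k+1) n).connectedComponentMk (fun _ => ⟨0, hn1⟩), rfl⟩

end Conn

section API

/-- embedding-style containment -/
def EmbTo {α β : Type} (G : SimpleGraph α) (H : SimpleGraph β) : Prop :=
  ∃ f : β → α, Function.Injective f ∧ ∀ a b, G.Adj (f a) (f b) ↔ H.Adj a b

lemma contains_of_embTo {α β : Type} {G : SimpleGraph α} {H : SimpleGraph β}
    (h : EmbTo G H) : Contains G H := by
  obtain ⟨f, hinj, hadj⟩ := h
  refine ⟨Set.range f, ⟨?_⟩⟩
  refine ⟨(Equiv.ofInjective f hinj).symm, ?_⟩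
  intro a b
  have ha : f ((Equiv.ofInjective f hinj).symm a) = a.1 := by
    exact congrArg Subtype.val ((Equiv.ofInjective f hinj).apply_symm_apply a)
  have hb : f ((Equiv.ofInjective f hinj).symm b) = b.1 := by
    exact congrArg Subtype.val ((Equiv.ofInjective f hinj).apply_symm_apply b)
  rw [← hadj, ha, hb]
  rfl

lemma embTo_trans {α β γ : Type} {G : SimpleGraph α} {H : SimpleGraph β} {K : SimpleGraph γ}
    (h1 : EmbTo G H) (h2 : EmbTo H K) : EmbTo G K := by
  obtain ⟨f, hf, hfa⟩ := h1
  obtain ⟨g, hg, hga⟩ := h2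
  exact ⟨f ∘ g, hf.comp hg, fun a b => (hfa (g a) (g b)).trans (hga a b)⟩

lemma compl_induce {V : Type} (G : SimpleGraph V) (s : Set V) :
    (G.induce s)ᶜ = Gᶜ.induce s := by
  ext a b
  simp only [compl_adj, comap_adj, Function.Embedding.coe_subtype]
  constructor
  · rintro ⟨h1, h2⟩
    exact ⟨fun hh => h1 (Subtype.ext hh), h2⟩
  · rintro ⟨h1, h2⟩
    exact ⟨fun hh => h1 (congrArg Subtype.val hh), h2⟩

lemma compl_connected {V : Type} {G : SimpleGraph V} (hne : Nonempty V)
    (h : ¬ G.Connected) : Gᶜ.Connected := by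
  rw [connected_iff]
  refine ⟨?_, hne⟩
  intro u v
  by_cases huv : u = v
  · exact huv ▸ Reachable.refl u
  by_cases hadj : G.Adj u v
  · have hw : ∃ w, ¬ G.Reachable u w := by
      by_contra hc
      push_neg at hc
      exact h ((connected_iff G).mpr ⟨fun x y => ((hc x).symm.trans (hc y)), hne⟩)
    obtain ⟨w, hw⟩ := hw
    have hwu : w ≠ u := fun hh => hw (by rw [hh])
    have hwv : w ≠ v := fun hh => hw (by rw [hh]; exact hadj.reachable)
    have h1 : Gᶜ.Adj u w := ⟨Ne.symm hwu, fun ha => hw ha.reachable⟩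
    have h2 : Gᶜ.Adj w v := by
      refine ⟨hwv, fun ha => hw ?_⟩
      exact hadj.reachable.trans ha.symm.reachable
    exact h1.reachable.trans h2.reachable
  · exact Adj.reachable (by rw [compl_adj]; exact ⟨huv, hadj⟩)

lemma not_conn_or_subsingleton {V : Type} {G : SimpleGraph V} {h : ℕ}
    (hG : CographHeight G h) (hcc : Gᶜ.Connected) :
    ¬ G.Connected ∨ ∀ a b : V, a = b := by
  cases hG with
  | single G v hv => exact Or.inr (fun a b => (hv a).trans (hv b).symm)
  | union G k h ht hc hle hmax => exact Or.inl h
  | join G k h ht hc hle hmax => exact absurd hcc h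

end API

section Embed

lemma embTo_of_subsingleton {β : Type} (b : Bool) (k n : ℕ) (hn : 1 ≤ n)
    (G : SimpleGraph β) (hs : ∀ a c : β, a = c) : EmbTo (Gb b k n) G := by
  refine ⟨fun _ => (fun _ => ⟨0, hn⟩), fun a c _ => hs a c, fun a c => ?_⟩
  refine iff_of_false (fun hadj => (Gb b k n).irrefl hadj) ?_
  rw [hs a c]
  exact G.irrefl

lemma induce_adj_iff {V : Type} (G : SimpleGraph V) (s : Set V) (a b : ↥s) :
    (G.induce s).Adj a b ↔ G.Adj a.1 b.1 := Iff.rfl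

lemma embed : ∀ (k : ℕ) {W : Type} [Fintype W] (G : SimpleGraph W) (h : ℕ),
    CographHeight G h → h ≤ k → ∀ n, Fintype.card W ≤ n →
    ((G.Connected → EmbTo (Gb true k n) G) ∧
      ((¬ G.Connected ∨ h < k ∨ (∀ a c : W, a = c)) → EmbTo (Gb false k n) G)) := by
  intro k
  induction k using Nat.strong_induction_on with
  | _ k IH =>
    intro W instW G h hG hhk n hcard
    classical
    have hneW : Nonempty W := cographHeight_nonempty hG
    have hn1 : 1 ≤ n := le_trans (by simpa [Nat.succ_le_iff] using (Fintype.card_pos (α := W))) hcard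
    by_cases hsing : ∀ a c : W, a = c
    · exact ⟨fun _ => embTo_of_subsingleton true k n hn1 G hsing,
        fun _ => embTo_of_subsingleton false k n hn1 G hsing⟩
    -- common construction for the disconnected case
    have hUnion : ¬ G.Connected → EmbTo (Gb false k n) G := by
      intro hnc
      cases hG with
      | single G v hv => exact absurd (fun a c => (hv a).trans (hv c).symm) hsing
      | join G k' hcc ht hc hle hmax => exact absurd (compl_connected hneW hnc) hcc
      | union G k' hncG ht hc hle hmax =>
        obtain ⟨kk, rfl⟩ : ∃ kk, k = kk + 1 := ⟨k - 1, by omega⟩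
        have hA : ∀ c : G.ConnectedComponent, EmbTo (Gb true kk n) (G.induce c.supp) := by
          intro c
          refine (IH kk (by omega) (G.induce c.supp) (ht c) (hc c) (by have := hle c; omega) n
            (le_trans (Fintype.card_le_of_injective _ Subtype.val_injective) hcard)).1 ?_
          exact induce_supp_connected G c
        choose fc hfc using hA
        haveI : Fintype G.ConnectedComponent := Fintype.ofFinite _
        have hcc_card : Fintype.card G.ConnectedComponent ≤ n := by
          refine le_trans (Fintype.card_le_of_surjective G.connectedComponentMk ?_) hcard
          exact fun c => c.exists_rep
        obtain ⟨g⟩ := Function.Embedding.nonempty_of_card_le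
          (by simpa using hcc_card : Fintype.card G.ConnectedComponent ≤ Fintype.card (Fin n))
        set junk : Fin kk → Fin n := fun _ => ⟨0, hn1⟩ with hjunk
        set fbar : G.ConnectedComponent → W → (Fin kk → Fin n) :=
          fun c w => if hw : w ∈ c.supp then fc c ⟨w, hw⟩ else junk with hfbar
        refine ⟨fun w => Fin.cons (g (G.connectedComponentMk w))
          (fbar (G.connectedComponentMk w) w), ?_, ?_⟩
        · intro w w' hF
          have h0 : g (G.connectedComponentMk w) = g (G.connectedComponentMk w') := by
            have := congrFun hF 0
            simpa [Fin.cons_zero] using this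
          have hcmk := g.injective h0
          have htl : fbar (G.connectedComponentMk w) w = fbar (G.connectedComponentMk w') w' := by
            have := congrArg Fin.tail hF
            simpa [Fin.tail_cons] using this
          rw [← hcmk] at htl
          have m1 : w ∈ (G.connectedComponentMk w).supp := rfl
          have m2 : w' ∈ (G.connectedComponentMk w).supp := by
            rw [ConnectedComponent.mem_supp_iff]
            exact hcmk.symm
          rw [hfbar] at htl
          simp only [dif_pos m1, dif_pos m2] at htl
          have := (hfc (G.connectedComponentMk w)).1 htl
          exact congrArg Subtype.val this
        · intro a c
          by_cases hab : G.connectedComponentMk a = G.connectedComponentMk c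
          · beta_reduce
            rw [← hab, Gb_adj_cons_false]
            have m1 : a ∈ (G.connectedComponentMk a).supp := rfl
            have m2 : c ∈ (G.connectedComponentMk a).supp := by
              rw [ConnectedComponent.mem_supp_iff]; exact hab.symm
            have hred1 : fbar (G.connectedComponentMk a) a = fc _ ⟨a, m1⟩ := dif_pos m1
            have hred2 : fbar (G.connectedComponentMk a) c = fc _ ⟨c, m2⟩ := dif_pos m2
            rw [hred1, hred2]
            constructor
            · intro hh
              exact ((hfc (G.connectedComponentMk a)).2 _ _).mp hh.2
            · intro hh
              exact ⟨rfl, ((hfc (G.connectedComponentMk a)).2 ⟨a, m1⟩ ⟨c, m2⟩).mpr hh⟩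
          · beta_reduce
            rw [Gb_adj_cons_false]
            refine iff_of_false ?_ ?_
            · rintro ⟨h1, -⟩
              exact hab (g.injective h1)
            · intro hadj
              exact hab (ConnectedComponent.sound hadj.reachable)
    refine ⟨?_, ?_⟩
    · -- connected case : join decomposition
      intro hconn
      cases hG with
      | single G v hv => exact absurd (fun a c => (hv a).trans (hv c).symm) hsing
      | union G k' hncG ht hc hle hmax => exact absurd hconn hncG
      | join G k' hcc ht hc hle hmax =>
        obtain ⟨kk, rfl⟩ : ∃ kk, k = kk + 1 := ⟨k - 1, by omega⟩
        have hB : ∀ c : Gᶜ.ConnectedComponent, EmbTo (Gb false kk n) (G.induce c.supp) := by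
          intro c
          refine (IH kk (by omega) (G.induce c.supp) (ht c) (hc c) (by have := hle c; omega) n
            (le_trans (Fintype.card_le_of_injective _ Subtype.val_injective) hcard)).2 ?_
          have hccomp : ((G.induce c.supp))ᶜ.Connected := by
            rw [compl_induce]
            exact induce_supp_connected Gᶜ c
          rcases not_conn_or_subsingleton (hc c) hccomp with h1 | h2
          · exact Or.inl h1
          · exact Or.inr (Or.inr h2)
        choose fc hfc using hB
        haveI : Fintype Gᶜ.ConnectedComponent := Fintype.ofFinite _
        have hcc_card : Fintype.card Gᶜ.ConnectedComponent ≤ n := by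
          refine le_trans (Fintype.card_le_of_surjective Gᶜ.connectedComponentMk ?_) hcard
          exact fun c => c.exists_rep
        obtain ⟨g⟩ := Function.Embedding.nonempty_of_card_le
          (by simpa using hcc_card : Fintype.card Gᶜ.ConnectedComponent ≤ Fintype.card (Fin n))
        set junk : Fin kk → Fin n := fun _ => ⟨0, hn1⟩ with hjunk
        set fbar : Gᶜ.ConnectedComponent → W → (Fin kk → Fin n) :=
          fun c w => if hw : w ∈ c.supp then fc c ⟨w, hw⟩ else junk with hfbar
        refine ⟨fun w => Fin.cons (g (Gᶜ.connectedComponentMk w))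
          (fbar (Gᶜ.connectedComponentMk w) w), ?_, ?_⟩
        · intro w w' hF
          have h0 : g (Gᶜ.connectedComponentMk w) = g (Gᶜ.connectedComponentMk w') := by
            have := congrFun hF 0
            simpa [Fin.cons_zero] using this
          have hcmk := g.injective h0
          have htl : fbar (Gᶜ.connectedComponentMk w) w = fbar (Gᶜ.connectedComponentMk w') w' := by
            have := congrArg Fin.tail hF
            simpa [Fin.tail_cons] using this
          rw [← hcmk] at htl
          have m1 : w ∈ (Gᶜ.connectedComponentMk w).supp := rfl
          have m2 : w' ∈ (Gᶜ.connectedComponentMk w).supp := by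
            rw [ConnectedComponent.mem_supp_iff]
            exact hcmk.symm
          rw [hfbar] at htl
          simp only [dif_pos m1, dif_pos m2] at htl
          have := (hfc (Gᶜ.connectedComponentMk w)).1 htl
          exact congrArg Subtype.val this
        · intro a c
          by_cases hab : Gᶜ.connectedComponentMk a = Gᶜ.connectedComponentMk c
          · beta_reduce
            rw [← hab, Gb_adj_cons_true]
            have m1 : a ∈ (Gᶜ.connectedComponentMk a).supp := rfl
            have m2 : c ∈ (Gᶜ.connectedComponentMk a).supp := by
              rw [ConnectedComponent.mem_supp_iff]; exact hab.symm
            have hred1 : fbar (Gᶜ.connectedComponentMk a) a = fc _ ⟨a, m1⟩ := dif_pos m1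
            have hred2 : fbar (Gᶜ.connectedComponentMk a) c = fc _ ⟨c, m2⟩ := dif_pos m2
            rw [hred1, hred2]
            constructor
            · rintro (h1 | h1)
              · exact absurd rfl h1
              · exact ((hfc (Gᶜ.connectedComponentMk a)).2 _ _).mp h1.2
            · intro hh
              exact Or.inr ⟨rfl, ((hfc (Gᶜ.connectedComponentMk a)).2 ⟨a, m1⟩ ⟨c, m2⟩).mpr hh⟩
          · beta_reduce
            rw [Gb_adj_cons_true]
            refine iff_of_true ?_ ?_
            · exact Or.inl (fun h1 => hab (g.injective h1))
            · by_contra hadj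
              have hac : a ≠ c := fun hh => hab (congrArg _ hh)
              exact hab (ConnectedComponent.sound (Adj.reachable ⟨hac, hadj⟩))
    · -- Gb false target
      intro hside
      by_cases hconn : G.Connected
      · have hlt : h < k := by
          rcases hside with h1 | h2 | h3
          · exact absurd hconn h1
          · exact h2
          · exact absurd h3 hsing
        obtain ⟨kk, rfl⟩ : ∃ kk, k = kk + 1 := ⟨k - 1, by omega⟩
        obtain ⟨f, hinj, hadj⟩ := (IH kk (by omega) G h hG (by omega) n hcard).1 hconn
        refine ⟨fun w => Fin.cons ⟨0, hn1⟩ (f w), ?_, ?_⟩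
        · intro w w' hF
          apply hinj
          have := congrArg Fin.tail hF
          simpa [Fin.tail_cons] using this
        · intro a c
          rw [Gb_adj_cons_false]
          constructor
          · intro hh
            exact (hadj a c).mp hh.2
          · intro hh
            exact ⟨rfl, (hadj a c).mpr hh⟩
      · exact hUnion hconn

end Embed

section Pigeon

lemma pigeon : ∀ (k : ℕ) (b : Bool) (P s : ℕ), ∃ N : ℕ, ∀ n, N ≤ n →
    ∀ f : (Fin k → Fin n) → Fin P, ∃ p : Fin P,
      ∃ g : (Fin k → Fin s) → (Fin k → Fin n), Function.Injective g ∧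
        (∀ x, f (g x) = p) ∧
        (∀ x y, (Gb b k n).Adj (g x) (g y) ↔ (Gb b k s).Adj x y) := by
  intro k
  induction k with
  | zero =>
    intro b P s
    refine ⟨0, fun n _ f => ?_⟩
    refine ⟨f (fun i => i.elim0), fun x => (fun i => i.elim0), ?_, ?_, ?_⟩
    · intro x y _
      exact funext fun i => i.elim0
    · intro x
      rfl
    · intro x y
      exact iff_of_false (adjP_zero (n := n) b (fun i => i.elim0) (fun i => i.elim0)) (adjP_zero (n := s) b x y)
  | succ k ih =>
    intro b P s
    obtain ⟨N0, hN0⟩ := ih (!b) P s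
    refine ⟨max N0 (P * s + 1), fun n hn f => ?_⟩
    have hn0 : N0 ≤ n := le_trans (le_max_left _ _) hn
    have hn1 : P * s + 1 ≤ n := le_trans (le_max_right _ _) hn
    have H : ∀ a : Fin n, ∃ p : Fin P,
        ∃ g : (Fin k → Fin s) → (Fin k → Fin n), Function.Injective g ∧
          (∀ x, f (Fin.cons a (g x)) = p) ∧
          (∀ x y, (Gb (!b) k n).Adj (g x) (g y) ↔ (Gb (!b) k s).Adj x y) := by
      intro a
      obtain ⟨p, g, h1, h2, h3⟩ := hN0 n hn0 (fun x => f (Fin.cons a x))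
      exact ⟨p, g, h1, h2, h3⟩
    choose pa ga hga1 hga2 hga3 using H
    -- pigeonhole: some colour p receives at least s values of a
    have hplt : Fintype.card (Fin P) * s < Fintype.card (Fin n) := by
      simp only [Fintype.card_fin]
      omega
    obtain ⟨p, hp⟩ := Fintype.exists_lt_card_fiber_of_mul_lt_card (f := pa) hplt
    have hscard : s ≤ Fintype.card {a : Fin n // pa a = p} := by
      classical
      have := hp
      rw [Fintype.card_subtype]
      omega
    obtain ⟨c0⟩ := Function.Embedding.nonempty_of_card_le
      (by simpa using hscard : Fintype.card (Fin s) ≤ Fintype.card {a : Fin n // pa a = p})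
    set c : Fin s → Fin n := fun j => (c0 j).1 with hc
    have hcinj : Function.Injective c := fun j j' hh => c0.injective (Subtype.ext hh)
    have hcp : ∀ j, pa (c j) = p := fun j => (c0 j).2
    refine ⟨p, fun u => Fin.cons (c (u 0)) (ga (c (u 0)) (Fin.tail u)), ?_, ?_, ?_⟩
    · intro u u' hF
      have h0 : c (u 0) = c (u' 0) := by
        have := congrFun hF 0
        simpa [Fin.cons_zero] using this
      have h00 : u 0 = u' 0 := hcinj h0
      have htl : ga (c (u 0)) (Fin.tail u) = ga (c (u' 0)) (Fin.tail u') := by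
        have := congrArg Fin.tail hF
        simpa [Fin.tail_cons] using this
      rw [← h00] at htl
      have := hga1 (c (u 0)) htl
      rw [← Fin.cons_self_tail u, ← Fin.cons_self_tail u', ← h00, this]
    · intro u
      beta_reduce
      rw [hga2 (c (u 0)) (Fin.tail u)]
      exact hcp (u 0)
    · intro u v
      by_cases h0 : u 0 = v 0
      · have hL : ∀ (m : ℕ) (w z : Fin (k+1) → Fin m), w 0 = z 0 →
            ((Gb b (k+1) m).Adj w z ↔ (Gb (!b) k m).Adj (Fin.tail w) (Fin.tail z)) := by
          intro m w z hwz
          cases b with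
          | true =>
            rw [Gb_adj, adjP_true_succ]
            constructor
            · rintro (h1 | h1)
              · exact absurd hwz h1
              · exact h1.2
            · intro h1
              exact Or.inr ⟨hwz, h1⟩
          | false =>
            rw [Gb_adj, adjP_false_succ]
            constructor
            · exact fun h1 => h1.2
            · exact fun h1 => ⟨hwz, h1⟩
        beta_reduce
        rw [hL n _ _ (by simp only [Fin.cons_zero, h0]), hL s u v h0]
        simp only [Fin.tail_cons]
        rw [h0]
        exact hga3 (c (v 0)) (Fin.tail u) (Fin.tail v)
      · have hcc : c (u 0) ≠ c (v 0) := fun hh => h0 (hcinj hh)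
        beta_reduce
        cases b with
        | true =>
          refine iff_of_true ?_ ?_
          · rw [Gb_adj, adjP_true_succ]
            refine Or.inl ?_
            simpa [Fin.cons_zero] using hcc
          · rw [Gb_adj, adjP_true_succ]
            exact Or.inl h0
        | false =>
          refine iff_of_false ?_ ?_
          · rw [Gb_adj, adjP_false_succ]
            rintro ⟨h1, -⟩
            exact hcc (by simpa [Fin.cons_zero] using h1)
          · rw [Gb_adj, adjP_false_succ]
            rintro ⟨h1, -⟩
            exact h0 h1
        

end Pigeon

end Stmt9Aux

/-- Let `P, k` be positive integers and let `𝓕` be a finite set of connected cographs,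
all of height at most `k`.  Then there exists a connected cograph `C` of height `k`
that is `(𝓕,P)`-universal, i.e. `C` admits no `(𝓕,P)`-partition. -/
theorem stmt9 (P k : ℕ) (hP : 0 < P) (hk : 0 < k)
    {ι : Type} [Fintype ι] {V : ι → Type} [∀ i, Fintype (V i)]
    (F : ∀ i, SimpleGraph (V i))
    (hconn : ∀ i, (F i).Connected)
    (hheight : ∀ i, ∃ h ≤ k, CographHeight (F i) h) :
    ∃ (γ : Type) (_ : Fintype γ) (C : SimpleGraph γ),
      CographHeight C k ∧ C.Connected ∧
      ¬ HasPartition P (fun X : Set γ => ∃ i, Free (C.induce X) (F i)) := by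
  classical
  set s : ℕ := 2 + ∑ i : ι, Fintype.card (V i) with hs
  have hs2 : 2 ≤ s := Nat.le_add_right 2 _
  have hsi : ∀ i, Fintype.card (V i) ≤ s := by
    intro i
    have h1 : Fintype.card (V i) ≤ ∑ j : ι, Fintype.card (V j) :=
      Finset.single_le_sum (f := fun j => Fintype.card (V j)) (fun _ _ => Nat.zero_le _)
        (Finset.mem_univ i)
    omega
  obtain ⟨N, hN⟩ := Stmt9Aux.pigeon k true P s
  set n : ℕ := max N 2 with hn
  have hn2 : 2 ≤ n := le_max_right _ _
  have hnN : N ≤ n := le_max_left _ _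
  refine ⟨Fin k → Fin n, inferInstance, Stmt9Aux.Gb true k n,
    Stmt9Aux.height_Gb k true n hn2, Stmt9Aux.conn_true k n (by omega), ?_⟩
  rintro ⟨X, hcover, hdisj, hok⟩
  have hex : ∀ v : Fin k → Fin n, ∃ i, v ∈ X i := by
    intro v
    have h1 : v ∈ ⋃ i, X i := by rw [hcover]; exact Set.mem_univ v
    exact Set.mem_iUnion.mp h1
  choose fcol hfcol using hex
  obtain ⟨p, g, hginj, hgcol, hgadj⟩ := hN n hnN fcol
  have hsub : ∀ x, g x ∈ X p := by
    intro x
    have h1 := hfcol (g x)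
    rwa [hgcol x] at h1
  rcases hok p with ⟨v, hvp⟩ | ⟨i, hfree⟩
  · -- X p a singleton : contradiction, it holds two distinct vertices
    set x1 : Fin k → Fin s := fun _ => ⟨0, by omega⟩ with hx1
    set x2 : Fin k → Fin s := fun _ => ⟨1, by omega⟩ with hx2
    have h1 : g x1 = v := by
      have := hsub x1
      rwa [hvp, Set.mem_singleton_iff] at this
    have h2 : g x2 = v := by
      have := hsub x2
      rwa [hvp, Set.mem_singleton_iff] at this
    have h3 : x1 = x2 := hginj (h1.trans h2.symm)
    have h4 := congrFun h3 ⟨0, hk⟩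
    have h5 : (0 : ℕ) = 1 := congrArg Fin.val h4
    omega
  · -- X p is (F i)-free : contradiction, it contains F i
    apply hfree
    obtain ⟨h, hhk, hch⟩ := hheight i
    obtain ⟨f2, hf2inj, hf2adj⟩ := (Stmt9Aux.embed k (F i) h hch hhk s (hsi i)).1 (hconn i)
    apply Stmt9Aux.contains_of_embTo
    refine ⟨fun a => ⟨g (f2 a), hsub _⟩, ?_, ?_⟩
    · intro a b hab
      exact hf2inj (hginj (congrArg Subtype.val hab))
    · intro a b
      exact (hgadj (f2 a) (f2 b)).trans (hf2adj a b)
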